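/- Weight accuracy in smooth regions (Proposition): let r ≥ 2, t = 2r−1, and L ≥ 0. There exists a constant M > 0, depending only on r and L, such that for every 0 < h ≤ 1, every x₀ ∈ ℝ, every integer j, and every f : ℝ → ℝ satisfying |f(x_{j+ξ}) − f(x_{j+ξ−1})| ≤ L·h for all −r+1 ≤ ξ ≤ r−1, the nonlinear weights satisfy |ω_k − C^{2r-1}_{r-1,k}| ≤ M·h^{t} for every 0 ≤ k ≤ r−1. -/

import Mathlib

/-- The node `x_m = x₀ + m·h`. -/
noncomputable def nd (h x₀ : ℝ) (m : ℤ) : ℝ := x₀ + (m : ℝ) * h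

/-- Value at the midpoint `x₀ + (j - 1/2)·h` of the Lagrange interpolant of `f`
at the `a+1` equally spaced nodes `x_{j+b-a}, …, x_{j+b}` where `x_m = x₀ + m·h`. -/
noncomputable def Pval (h x₀ : ℝ) (j a b : ℤ) (f : ℝ → ℝ) : ℝ :=
  (Lagrange.interpolate (Finset.Icc (j + b - a) (j + b)) (fun m : ℤ => x₀ + (m : ℝ) * h)
    (fun m : ℤ => f (x₀ + (m : ℝ) * h))).eval (x₀ + ((j : ℝ) - 1 / 2) * h)

/-- The classical optimal weights `C^{2r-1}_{r-1,k} = 2^{-(2r-1)} · C(2r, 2k+1)`. -/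
noncomputable def Copt (r k : ℕ) : ℝ :=
  (1 / 2 ^ (2 * r - 1)) * (Nat.choose (2 * r) (2 * k + 1) : ℝ)

/-- The general optimal weights `C^{r+l-1}_{l-1,k}`, for `1 ≤ l ≤ r` and `0 ≤ k ≤ l-1`. -/
noncomputable def C1 (r l k : ℕ) : ℝ :=
  (1 / 2 ^ (2 * l)) * (((r : ℝ) + (l : ℝ)) / (l : ℝ)) *
    (((l : ℝ) - (k : ℝ)) / ((r : ℝ) - (k : ℝ))) *
    (Nat.choose l k : ℝ) * ((Nat.choose r k : ℝ))⁻¹ * (Nat.choose (2 * l) l : ℝ) *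
    ((Nat.choose (l + r) r : ℝ))⁻¹ * (Nat.choose (2 * r) (2 * k + 1) : ℝ)

/-- The smoothness indicators `J_ξ = |f(x_{j+ξ}) − f(x_{j+ξ-1})|^{2t}` with `t = 2r-1`. -/
noncomputable def Jf (h x₀ : ℝ) (j : ℤ) (r : ℕ) (f : ℝ → ℝ) (ξ : ℤ) : ℝ :=
  |f (nd h x₀ (j + ξ)) - f (nd h x₀ (j + ξ - 1))| ^ (2 * (2 * r - 1))

/-- The nonlinear weight numerators
`α_k = C^{2r-1}_{r-1,k} + h^{-(2r-1)}·(Σ_{l=k+1}^{r-1} C^{r+l-1}_{l-1,k} J_l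
  + Σ_{l=0}^{k-1} C^{2r-l-2}_{r-1,k} J_{l-r+1})`,
where the reflected weight `C^{2r-l-2}_{r-1,k}` equals `C1 r (r-l-1) (r-1-k)`. -/
noncomputable def alphaW (h x₀ : ℝ) (j : ℤ) (r : ℕ) (f : ℝ → ℝ) (k : ℕ) : ℝ :=
  Copt r k + (h ^ (2 * r - 1))⁻¹ *
    ((∑ l ∈ Finset.Icc (k + 1) (r - 1), C1 r l k * Jf h x₀ j r f (l : ℤ)) +
      ∑ l ∈ Finset.range k, C1 r (r - l - 1) (r - 1 - k) * Jf h x₀ j r f ((l : ℤ) - (r : ℤ) + 1))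

/-- The nonlinear weights `ω_k = α_k / (α_0 + ⋯ + α_{r-1})`. -/
noncomputable def omegaW (h x₀ : ℝ) (j : ℤ) (r : ℕ) (f : ℝ → ℝ) (k : ℕ) : ℝ :=
  alphaW h x₀ j r f k / ∑ i ∈ Finset.range r, alphaW h x₀ j r f i

lemma odd_choose_sum (r : ℕ) (hr : 1 ≤ r) :
    ∑ k ∈ Finset.range r, ((2 * r).choose (2 * k + 1) : ℤ) = 2 ^ (2 * r - 1) := by
  have hA : ∑ i ∈ Finset.range (2 * r + 1), (-1 : ℤ) ^ i * ((2 * r).choose i : ℤ) = 0 :=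
    Int.alternating_sum_range_choose_of_ne (by omega)
  have hB : ∑ i ∈ Finset.range (2 * r + 1), ((2 * r).choose i : ℤ) = 2 ^ (2 * r) := by
    exact_mod_cast Nat.sum_range_choose (2 * r)
  have hsplit : ∑ i ∈ (Finset.range (2 * r + 1)).filter (fun i => Odd i),
      (2 : ℤ) * ((2 * r).choose i : ℤ)
      = ∑ i ∈ Finset.range (2 * r + 1), (1 - (-1 : ℤ) ^ i) * ((2 * r).choose i : ℤ) := by
    rw [Finset.sum_filter]
    refine Finset.sum_congr rfl fun i _ => ?_
    by_cases hi : Odd i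
    · rw [if_pos hi, hi.neg_one_pow]; ring
    · rw [if_neg hi, (Nat.not_odd_iff_even.mp hi).neg_one_pow]; ring
  have hbij : ∑ i ∈ (Finset.range (2 * r + 1)).filter (fun i => Odd i),
      (2 : ℤ) * ((2 * r).choose i : ℤ)
      = ∑ k ∈ Finset.range r, (2 : ℤ) * ((2 * r).choose (2 * k + 1) : ℤ) := by
    refine (Finset.sum_nbij' (fun k => 2 * k + 1) (fun i => i / 2) ?_ ?_ ?_ ?_ ?_).symm
    · intro k hk
      simp only [Finset.mem_range] at hk
      simp only [Finset.mem_filter, Finset.mem_range]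
      exact ⟨by omega, ⟨k, by omega⟩⟩
    · intro i hi
      simp only [Finset.mem_filter, Finset.mem_range] at hi
      obtain ⟨m, hm⟩ := hi.2
      simp only [Finset.mem_range]; omega
    · intro k _; show (2*k+1)/2 = k; omega
    · intro i hi
      simp only [Finset.mem_filter, Finset.mem_range] at hi
      obtain ⟨m, hm⟩ := hi.2
      show 2*(i/2)+1 = i; omega
    · intro k _; rfl
  have h2 : ∑ i ∈ Finset.range (2 * r + 1), (1 - (-1 : ℤ) ^ i) * ((2 * r).choose i : ℤ)
      = 2 ^ (2 * r) := by
    have : ∀ i, (1 - (-1 : ℤ) ^ i) * ((2 * r).choose i : ℤ)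
        = ((2 * r).choose i : ℤ) - (-1 : ℤ) ^ i * ((2 * r).choose i : ℤ) := fun i => by ring
    simp_rw [this, Finset.sum_sub_distrib, hA, hB, sub_zero]
  have hfin : (2 : ℤ) * ∑ k ∈ Finset.range r, ((2 * r).choose (2 * k + 1) : ℤ) = 2 ^ (2 * r) := by
    rw [Finset.mul_sum, ← hbij, hsplit, h2]
  have h2r : (2 : ℤ) ^ (2 * r) = 2 * 2 ^ (2 * r - 1) := by
    rw [← pow_succ']; congr 1; omega
  rw [h2r] at hfin
  linarith

lemma Copt_sum (r : ℕ) (hr : 1 ≤ r) : ∑ k ∈ Finset.range r, Copt r k = 1 := by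
  unfold Copt
  rw [← Finset.mul_sum]
  have : ∑ k ∈ Finset.range r, ((2 * r).choose (2 * k + 1) : ℝ) = 2 ^ (2 * r - 1) := by
    exact_mod_cast congrArg (Int.cast : ℤ → ℝ) (odd_choose_sum r hr)
  rw [this]
  have hx : (2:ℝ)^(2*r-1) ≠ 0 := by positivity
  field_simp

lemma C1_nonneg (r l k : ℕ) (hkl : k < l) (hlr : l ≤ r) : 0 ≤ C1 r l k := by
  have h1 : (k : ℝ) ≤ (l : ℝ) := by exact_mod_cast hkl.le
  have h2 : (k : ℝ) ≤ (r : ℝ) := by exact_mod_cast hkl.le.trans hlr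
  unfold C1
  refine mul_nonneg (mul_nonneg (mul_nonneg (mul_nonneg (mul_nonneg (mul_nonneg
    (mul_nonneg ?_ ?_) ?_) ?_) ?_) ?_) ?_) ?_
  · positivity
  · positivity
  · exact div_nonneg (by linarith) (by linarith)
  · positivity
  · positivity
  · positivity
  · positivity
  · positivity

lemma Copt_nonneg (r k : ℕ) : 0 ≤ Copt r k := by unfold Copt; positivity

theorem weights_smooth_accuracy (r : ℕ) (hr : 2 ≤ r) (L : ℝ) (hL : 0 ≤ L) :
    ∃ M > 0, ∀ h : ℝ, 0 < h → h ≤ 1 → ∀ x₀ : ℝ, ∀ j : ℤ, ∀ f : ℝ → ℝ,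
      (∀ ξ : ℤ, -(r : ℤ) + 1 ≤ ξ → ξ ≤ (r : ℤ) - 1 →
        |f (nd h x₀ (j + ξ)) - f (nd h x₀ (j + ξ - 1))| ≤ L * h) →
      ∀ k < r, |omegaW h x₀ j r f k - Copt r k| ≤ M * h ^ (2 * r - 1) := by
  set t := 2 * r - 1 with ht
  set B : ℕ → ℝ := fun k => (∑ l ∈ Finset.Icc (k + 1) (r - 1), C1 r l k) +
      ∑ l ∈ Finset.range k, C1 r (r - l - 1) (r - 1 - k) with hBdef
  have hBnn : ∀ k, k < r → 0 ≤ B k := by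
    intro k hk
    apply add_nonneg
    · refine Finset.sum_nonneg fun l hl => ?_
      rw [Finset.mem_Icc] at hl
      exact C1_nonneg r l k (by omega) (by omega)
    · refine Finset.sum_nonneg fun l hl => ?_
      rw [Finset.mem_range] at hl
      exact C1_nonneg r (r - l - 1) (r - 1 - k) (by omega) (by omega)
  set K := ∑ i ∈ Finset.range r, B i with hKdef
  have hKnn : 0 ≤ K := Finset.sum_nonneg fun i hi => hBnn i (Finset.mem_range.mp hi)
  refine ⟨1 + 2 * K * L ^ (2 * t), by positivity, ?_⟩
  intro h hh h1 x₀ j f hf k hk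
  have hht : (0:ℝ) < h ^ t := pow_pos hh t
  have hJnn : ∀ ξ : ℤ, 0 ≤ Jf h x₀ j r f ξ := fun ξ => pow_nonneg (abs_nonneg _) _
  have hJub : ∀ ξ : ℤ, -(r : ℤ) + 1 ≤ ξ → ξ ≤ (r : ℤ) - 1 →
      Jf h x₀ j r f ξ ≤ (L * h) ^ (2 * t) := fun ξ h1' h2' =>
    pow_le_pow_left₀ (abs_nonneg _) (hf ξ h1' h2') _
  set e : ℕ → ℝ := fun i => alphaW h x₀ j r f i - Copt r i with hedef
  have halpha : ∀ i, alphaW h x₀ j r f i = Copt r i + e i := fun i => by simp [hedef]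
  have hpow : (h ^ t)⁻¹ * (L * h) ^ (2 * t) = L ^ (2 * t) * h ^ t := by
    rw [mul_pow, two_mul, pow_add]
    field_simp
    ring
  have hebounds : ∀ i, i < r → 0 ≤ e i ∧ e i ≤ B i * (L ^ (2 * t) * h ^ t) := by
    intro i hi
    have hrc : (1:ℝ) ≤ (r:ℝ) := by exact_mod_cast (by omega : 1 ≤ r)
    have hexpr : e i = (h ^ t)⁻¹ *
        ((∑ l ∈ Finset.Icc (i + 1) (r - 1), C1 r l i * Jf h x₀ j r f (l : ℤ)) +
          ∑ l ∈ Finset.range i, C1 r (r - l - 1) (r - 1 - i) *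
            Jf h x₀ j r f ((l : ℤ) - (r : ℤ) + 1)) := by
      simp [hedef, alphaW, ht]
    have hs1nn : ∀ l ∈ Finset.Icc (i + 1) (r - 1), 0 ≤ C1 r l i := by
      intro l hl; rw [Finset.mem_Icc] at hl; exact C1_nonneg r l i (by omega) (by omega)
    have hs2nn : ∀ l ∈ Finset.range i, 0 ≤ C1 r (r - l - 1) (r - 1 - i) := by
      intro l hl; rw [Finset.mem_range] at hl
      exact C1_nonneg r (r - l - 1) (r - 1 - i) (by omega) (by omega)
    constructor
    · rw [hexpr]
      refine mul_nonneg (by positivity) (add_nonneg ?_ ?_)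
      · exact Finset.sum_nonneg fun l hl => mul_nonneg (hs1nn l hl) (hJnn _)
      · exact Finset.sum_nonneg fun l hl => mul_nonneg (hs2nn l hl) (hJnn _)
    · rw [hexpr]
      have hsum1 : (∑ l ∈ Finset.Icc (i + 1) (r - 1), C1 r l i * Jf h x₀ j r f (l : ℤ)) ≤
          (∑ l ∈ Finset.Icc (i + 1) (r - 1), C1 r l i) * (L * h) ^ (2 * t) := by
        rw [Finset.sum_mul]
        refine Finset.sum_le_sum fun l hl => ?_
        rw [Finset.mem_Icc] at hl
        refine mul_le_mul_of_nonneg_left (hJub (l : ℤ) ?_ ?_) (hs1nn l (by rw [Finset.mem_Icc]; omega))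
        · omega
        · omega
      have hsum2 : (∑ l ∈ Finset.range i, C1 r (r - l - 1) (r - 1 - i) *
            Jf h x₀ j r f ((l : ℤ) - (r : ℤ) + 1)) ≤
          (∑ l ∈ Finset.range i, C1 r (r - l - 1) (r - 1 - i)) * (L * h) ^ (2 * t) := by
        rw [Finset.sum_mul]
        refine Finset.sum_le_sum fun l hl => ?_
        rw [Finset.mem_range] at hl
        refine mul_le_mul_of_nonneg_left (hJub _ ?_ ?_) (hs2nn l (by rw [Finset.mem_range]; omega))
        · omega
        · omega
      calc (h ^ t)⁻¹ * _ ≤ (h ^ t)⁻¹ * (B i * (L * h) ^ (2 * t)) := by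
            refine mul_le_mul_of_nonneg_left ?_ (by positivity)
            rw [hBdef]
            simp only [add_mul]
            exact add_le_add hsum1 hsum2
        _ = B i * (L ^ (2 * t) * h ^ t) := by
            rw [← hpow]; ring
  set E := ∑ i ∈ Finset.range r, e i with hEdef
  have hEnn : 0 ≤ E := Finset.sum_nonneg fun i hi => (hebounds i (Finset.mem_range.mp hi)).1
  have hEub : E ≤ K * (L ^ (2 * t) * h ^ t) := by
    rw [hKdef, Finset.sum_mul]
    exact Finset.sum_le_sum fun i hi => (hebounds i (Finset.mem_range.mp hi)).2
  have hCsum : ∑ i ∈ Finset.range r, Copt r i = 1 := Copt_sum r (by omega)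
  have hS : ∑ i ∈ Finset.range r, alphaW h x₀ j r f i = 1 + E := by
    rw [hEdef, ← hCsum, ← Finset.sum_add_distrib]
    exact Finset.sum_congr rfl fun i _ => halpha i
  have hS1 : (1:ℝ) ≤ ∑ i ∈ Finset.range r, alphaW h x₀ j r f i := by rw [hS]; linarith
  have hSpos : (0:ℝ) < ∑ i ∈ Finset.range r, alphaW h x₀ j r f i := lt_of_lt_of_le one_pos hS1
  have hCk1 : Copt r k ≤ 1 := by
    rw [← hCsum]
    exact Finset.single_le_sum (fun i _ => Copt_nonneg r i) (Finset.mem_range.mpr hk)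
  have hBK : B k ≤ K := by
    rw [hKdef]
    exact Finset.single_le_sum (fun i hi => hBnn i (Finset.mem_range.mp hi)) (Finset.mem_range.mpr hk)
  obtain ⟨hek0, hek1⟩ := hebounds k hk
  have hnum : omegaW h x₀ j r f k - Copt r k =
      (e k - Copt r k * E) / (∑ i ∈ Finset.range r, alphaW h x₀ j r f i) := by
    rw [omegaW, eq_div_iff (ne_of_gt hSpos), sub_mul, div_mul_cancel₀ _ (ne_of_gt hSpos), hS,
      halpha k]
    ring
  rw [hnum, abs_div, abs_of_pos hSpos]
  have habs : |e k - Copt r k * E| ≤ e k + E := by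
    have h1' : Copt r k * E ≤ 1 * E := mul_le_mul_of_nonneg_right hCk1 hEnn
    have h2' : 0 ≤ Copt r k * E := mul_nonneg (Copt_nonneg r k) hEnn
    rw [abs_sub_le_iff]
    constructor <;> linarith
  have hdiv : |e k - Copt r k * E| / (∑ i ∈ Finset.range r, alphaW h x₀ j r f i) ≤
      |e k - Copt r k * E| := div_le_self (abs_nonneg _) hS1
  have hBkub : B k * (L ^ (2 * t) * h ^ t) ≤ K * (L ^ (2 * t) * h ^ t) :=
    mul_le_mul_of_nonneg_right hBK (by positivity)
  have hfinal : e k + E ≤ (1 + 2 * K * L ^ (2 * t)) * h ^ t := by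
    have : K * (L ^ (2 * t) * h ^ t) + K * (L ^ (2 * t) * h ^ t) ≤
        (1 + 2 * K * L ^ (2 * t)) * h ^ t := by nlinarith
    linarith
  calc |e k - Copt r k * E| / _ ≤ |e k - Copt r k * E| := hdiv
    _ ≤ e k + E := habs
    _ ≤ (1 + 2 * K * L ^ (2 * t)) * h ^ t := hfinal
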